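/- For a countable group G the following are equivalent: (i) there exist d : ℕ → ℕ and maps α_m : G → U(d m) such that for all g, h ∈ G, ‖α_m(gh) − α_m(g)α_m(h)‖ → 0 as m → ∞, and for every g ∈ G with g ≠ 1, ‖α_m(g) − 1‖ does not converge to 0; (ii) for every finite subset F ⊆ G there exists δ > 0 such that for every ε > 0 there exist n ∈ ℕ and a map α : G → U(n) with ‖α(gh) − α(g)α(h)‖ < ε for all g, h ∈ F and ‖α(g) − 1‖ > δ for every g ∈ F with g ≠ 1. -/

import Mathlib

open Filter

/-- The operator norm (as operators on `ℂⁿ` with the `ℓ²` norm) of a complex matrix. -/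
noncomputable def matOpNorm {N : Type*} [Fintype N] [DecidableEq N]
    (A : Matrix N N ℂ) : ℝ :=
  ‖Matrix.toEuclideanCLM (𝕜 := ℂ) (n := N) A‖

namespace StmtAux

open scoped Matrix.Norms.L2Operator
open Matrix

noncomputable instance {n : Type*} [Fintype n] [DecidableEq n] : CStarAlgebra (Matrix n n ℂ) := Matrix.instCStarAlgebra

variable {n m : Type*} [Fintype n] [DecidableEq n] [Fintype m] [DecidableEq m]

lemma matN (A : Matrix n n ℂ) : matOpNorm A = ‖A‖ := rfl

lemma unitary_norm_le (u : Matrix n n ℂ) (hu : u ∈ Matrix.unitaryGroup n ℂ) : ‖u‖ ≤ 1 := by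
  cases isEmpty_or_nonempty n with
  | inl h => simp [Subsingleton.elim u 0]
  | inr h =>
    haveI : Nontrivial (Matrix n n ℂ) := by
      refine ⟨0, 1, fun h0 => ?_⟩
      have := congrFun (congrFun h0 (Classical.arbitrary n)) (Classical.arbitrary n)
      simp at this
    exact le_of_eq (CStarRing.norm_coe_unitary (⟨u, hu⟩ : unitary (Matrix n n ℂ)))

lemma euclid_norm (v : n → ℂ) :
    ‖(WithLp.equiv 2 (n → ℂ)).symm v‖ = Real.sqrt (∑ i, ‖v i‖ ^ 2) := by
  rw [EuclideanSpace.norm_eq]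
  simp

lemma sq_sum_mulVec_le (A : Matrix n n ℂ) (v : n → ℂ) :
    ∑ i, ‖(A *ᵥ v) i‖ ^ 2 ≤ ‖A‖ ^ 2 * ∑ i, ‖v i‖ ^ 2 := by
  have h := Matrix.l2_opNorm_mulVec A ((WithLp.equiv 2 (n → ℂ)).symm v)
  have h1 : ‖(EuclideanSpace.equiv n ℂ).symm (A *ᵥ ((WithLp.equiv 2 (n → ℂ)).symm v))‖
      = Real.sqrt (∑ i, ‖(A *ᵥ v) i‖ ^ 2) := by
    rw [EuclideanSpace.norm_eq]; simp
  rw [h1, euclid_norm] at h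
  have h2 : 0 ≤ ∑ i, ‖(A *ᵥ v) i‖ ^ 2 := Finset.sum_nonneg fun i _ => sq_nonneg _
  have h3 : 0 ≤ ∑ i, ‖v i‖ ^ 2 := Finset.sum_nonneg fun i _ => sq_nonneg _
  have h4 : 0 ≤ ‖A‖ := norm_nonneg _
  nlinarith [Real.sq_sqrt h2, Real.sq_sqrt h3, Real.sqrt_nonneg (∑ i, ‖(A *ᵥ v) i‖ ^ 2),
    Real.sqrt_nonneg (∑ i, ‖v i‖ ^ 2)]

lemma norm_le_of_sq (A : Matrix n n ℂ) {c : ℝ} (hc : 0 ≤ c)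
    (h : ∀ v : n → ℂ, ∑ i, ‖(A *ᵥ v) i‖ ^ 2 ≤ c ^ 2 * ∑ i, ‖v i‖ ^ 2) : ‖A‖ ≤ c := by
  rw [Matrix.cstar_norm_def]
  refine ContinuousLinearMap.opNorm_le_bound _ hc fun x => ?_
  set v : n → ℂ := WithLp.equiv 2 (n → ℂ) x with hv
  have hx : x = (WithLp.equiv 2 (n → ℂ)).symm v := by simp [hv]
  rw [hx, show Matrix.toEuclideanCLM (𝕜 := ℂ) (n := n) A ((WithLp.equiv 2 (n → ℂ)).symm v)
      = (WithLp.equiv 2 (n → ℂ)).symm (Matrix.toLin' A v) from rfl, euclid_norm, euclid_norm]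
  have := h v
  rw [Matrix.toLin'_apply]
  have h2 : 0 ≤ ∑ i, ‖(A *ᵥ v) i‖ ^ 2 := Finset.sum_nonneg fun i _ => sq_nonneg _
  have h3 : 0 ≤ ∑ i, ‖v i‖ ^ 2 := Finset.sum_nonneg fun i _ => sq_nonneg _
  calc Real.sqrt (∑ i, ‖(A *ᵥ v) i‖ ^ 2) ≤ Real.sqrt (c ^ 2 * ∑ i, ‖v i‖ ^ 2) :=
        Real.sqrt_le_sqrt (h v)
    _ = c * Real.sqrt (∑ i, ‖v i‖ ^ 2) := by
        rw [Real.sqrt_mul (sq_nonneg c), Real.sqrt_sq hc]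

lemma sq_le_norm_mulVec (A : Matrix n n ℂ) {c : ℝ} (hc : ‖A‖ ≤ c) (v : n → ℂ) :
    ∑ i, ‖(A *ᵥ v) i‖ ^ 2 ≤ c ^ 2 * ∑ i, ‖v i‖ ^ 2 := by
  refine (sq_sum_mulVec_le A v).trans ?_
  have h3 : 0 ≤ ∑ i, ‖v i‖ ^ 2 := Finset.sum_nonneg fun i _ => sq_nonneg _
  have : ‖A‖ ^ 2 ≤ c ^ 2 := by nlinarith [norm_nonneg A]
  nlinarith


lemma norm_reindex_le (e : m ≃ n) (A : Matrix m m ℂ) : ‖reindex e e A‖ ≤ ‖A‖ := by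
  refine norm_le_of_sq _ (norm_nonneg A) fun v => ?_
  have hm : (reindex e e A) *ᵥ v = (A *ᵥ (v ∘ e)) ∘ e.symm := by
    rw [Matrix.reindex_apply]
    rw [Matrix.submatrix_mulVec_equiv]
    rw [Equiv.symm_symm]
  rw [hm]
  have h1 : ∑ i, ‖((A *ᵥ (v ∘ e)) ∘ e.symm) i‖ ^ 2 = ∑ i, ‖(A *ᵥ (v ∘ e)) i‖ ^ 2 :=
    e.symm.sum_comp fun i => ‖(A *ᵥ (v ∘ e)) i‖ ^ 2
  have h2 : ∑ i, ‖v i‖ ^ 2 = ∑ i, ‖(v ∘ e) i‖ ^ 2 :=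
    (e.sum_comp fun i => ‖v i‖ ^ 2).symm
  rw [h1, h2]
  exact sq_le_norm_mulVec A le_rfl _

lemma norm_reindex (e : m ≃ n) (A : Matrix m m ℂ) : ‖reindex e e A‖ = ‖A‖ := by
  refine le_antisymm (norm_reindex_le e A) ?_
  have := norm_reindex_le e.symm (reindex e e A)
  simpa using this

lemma reindex_unitary (e : m ≃ n) (A : Matrix m m ℂ) (hA : A ∈ Matrix.unitaryGroup m ℂ) :
    reindex e e A ∈ Matrix.unitaryGroup n ℂ := by
  rw [Matrix.mem_unitaryGroup_iff] at hA ⊢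
  rw [Matrix.star_eq_conjTranspose, Matrix.reindex_apply, Matrix.conjTranspose_submatrix,
    Matrix.submatrix_mul_equiv, ← Matrix.star_eq_conjTranspose, hA, Matrix.submatrix_one_equiv]

section BD
variable {ι : Type*} [Fintype ι] [DecidableEq ι] {p : ι → Type*} [∀ i, Fintype (p i)]
  [∀ i, DecidableEq (p i)]

lemma bd'_mulVec (M : ∀ i, Matrix (p i) (p i) ℂ) (v : (Σ i, p i) → ℂ) (i : ι) (j : p i) :
    (Matrix.blockDiagonal' M *ᵥ v) ⟨i, j⟩ = (M i *ᵥ fun j' => v ⟨i, j'⟩) j := by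
  simp only [Matrix.mulVec, dotProduct]
  rw [← Finset.univ_sigma_univ, Finset.sum_sigma]
  refine Finset.sum_eq_single_of_mem i (Finset.mem_univ i) (fun b _ hb => ?_) |>.trans ?_
  · apply Finset.sum_eq_zero; intro j' _
    rw [Matrix.blockDiagonal'_apply_ne M _ _ (Ne.symm hb), zero_mul]
  · refine Finset.sum_congr rfl fun j' _ => ?_
    rw [Matrix.blockDiagonal'_apply_eq]


lemma bd'_norm_le (M : ∀ i, Matrix (p i) (p i) ℂ) {c : ℝ} (hc : 0 ≤ c)
    (h : ∀ i, ‖M i‖ ≤ c) : ‖Matrix.blockDiagonal' M‖ ≤ c := by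
  refine norm_le_of_sq _ hc fun v => ?_
  rw [← Finset.univ_sigma_univ, Finset.sum_sigma, Finset.sum_sigma]
  calc ∑ i, ∑ j, ‖(Matrix.blockDiagonal' M *ᵥ v) ⟨i, j⟩‖ ^ 2
      = ∑ i, ∑ j, ‖(M i *ᵥ fun j' => v ⟨i, j'⟩) j‖ ^ 2 := by
        refine Finset.sum_congr rfl fun i _ => Finset.sum_congr rfl fun j _ => ?_
        rw [bd'_mulVec]
    _ ≤ ∑ i, c ^ 2 * ∑ j, ‖v ⟨i, j⟩‖ ^ 2 :=
        Finset.sum_le_sum fun i _ => sq_le_norm_mulVec (M i) (h i) _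
    _ = c ^ 2 * ∑ i, ∑ j, ‖v ⟨i, j⟩‖ ^ 2 := (Finset.mul_sum _ _ _).symm

lemma bd'_norm_ge (M : ∀ i, Matrix (p i) (p i) ℂ) (i₀ : ι) :
    ‖M i₀‖ ≤ ‖Matrix.blockDiagonal' M‖ := by
  refine norm_le_of_sq _ (norm_nonneg _) fun w => ?_
  classical
  set v : (Σ i, p i) → ℂ := fun q => if h : q.1 = i₀ then w (h ▸ q.2) else 0 with hv
  have hvi : (fun j' => v ⟨i₀, j'⟩) = w := by funext j'; simp [hv]
  have hsum : ∑ q : Σ i, p i, ‖v q‖ ^ 2 = ∑ j, ‖w j‖ ^ 2 := by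
    rw [← Finset.univ_sigma_univ, Finset.sum_sigma]
    refine Finset.sum_eq_single_of_mem i₀ (Finset.mem_univ i₀) (fun b _ hb => ?_) |>.trans ?_
    · apply Finset.sum_eq_zero; intro j' _; simp [hv, hb]
    · refine Finset.sum_congr rfl fun j _ => ?_; simp [hv]
  have hineq : ∑ j, ‖(M i₀ *ᵥ w) j‖ ^ 2 ≤ ∑ q : Σ i, p i, ‖(Matrix.blockDiagonal' M *ᵥ v) q‖ ^ 2 := by
    rw [← Finset.univ_sigma_univ, Finset.sum_sigma]
    have : ∀ j, ‖(M i₀ *ᵥ w) j‖ ^ 2 = ‖(Matrix.blockDiagonal' M *ᵥ v) ⟨i₀, j⟩‖ ^ 2 := by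
      intro j; rw [bd'_mulVec, hvi]
    rw [Finset.sum_congr rfl fun j _ => this j]
    exact Finset.single_le_sum (f := fun i => ∑ j, ‖(Matrix.blockDiagonal' M *ᵥ v) ⟨i, j⟩‖ ^ 2)
      (fun i _ => Finset.sum_nonneg fun j _ => sq_nonneg _) (Finset.mem_univ i₀)
  calc ∑ j, ‖(M i₀ *ᵥ w) j‖ ^ 2 ≤ ∑ q : Σ i, p i, ‖(Matrix.blockDiagonal' M *ᵥ v) q‖ ^ 2 := hineq
    _ ≤ ‖Matrix.blockDiagonal' M‖ ^ 2 * ∑ q : Σ i, p i, ‖v q‖ ^ 2 :=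
        sq_le_norm_mulVec _ le_rfl _
    _ = ‖Matrix.blockDiagonal' M‖ ^ 2 * ∑ j, ‖w j‖ ^ 2 := by rw [hsum]

lemma bd'_unitary (M : ∀ i, Matrix (p i) (p i) ℂ)
    (h : ∀ i, M i ∈ Matrix.unitaryGroup (p i) ℂ) :
    Matrix.blockDiagonal' M ∈ Matrix.unitaryGroup (Σ i, p i) ℂ := by
  rw [Matrix.mem_unitaryGroup_iff]
  rw [Matrix.star_eq_conjTranspose, Matrix.blockDiagonal'_conjTranspose,
    ← Matrix.blockDiagonal'_mul]
  have hfun : (fun i => M i * (M i)ᴴ) = fun i => (1 : Matrix (p i) (p i) ℂ) := by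
    funext i
    have := (Matrix.mem_unitaryGroup_iff).mp (h i)
    rwa [Matrix.star_eq_conjTranspose] at this
  rw [hfun]; exact Matrix.blockDiagonal'_one

end BD


section Kron
open Kronecker

lemma bdconst_norm_le {o : Type*} [Fintype o] [DecidableEq o] (A : Matrix m m ℂ) :
    ‖Matrix.blockDiagonal (fun _ : o => A)‖ ≤ ‖A‖ := by
  set e : (m × o) ≃ (Σ _ : o, m) := (Equiv.prodComm m o).trans (Equiv.sigmaEquivProd o m).symm with he
  have hcoe : ⇑e = (Prod.toSigma ∘ Prod.swap : m × o → Σ _ : o, m) := by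
    funext x; rfl
  have h1 : Matrix.blockDiagonal (fun _ : o => A)
      = Matrix.reindex e.symm e.symm (Matrix.blockDiagonal' fun _ : o => A) := by
    rw [Matrix.reindex_apply, Equiv.symm_symm, hcoe,
      Matrix.blockDiagonal'_submatrix_eq_blockDiagonal]
  rw [h1, norm_reindex]
  exact bd'_norm_le _ (norm_nonneg A) fun _ => le_rfl

lemma kron_conjTranspose (A : Matrix m m ℂ) (B : Matrix n n ℂ) :
    (A ⊗ₖ B)ᴴ = Aᴴ ⊗ₖ Bᴴ := by
  ext ⟨i, k⟩ ⟨j, l⟩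
  simp [Matrix.conjTranspose_apply, Matrix.kroneckerMap_apply, star_mul']

lemma kron_unitary (A : Matrix m m ℂ) (B : Matrix n n ℂ) (hA : A ∈ Matrix.unitaryGroup m ℂ)
    (hB : B ∈ Matrix.unitaryGroup n ℂ) : A ⊗ₖ B ∈ Matrix.unitaryGroup (m × n) ℂ := by
  rw [Matrix.mem_unitaryGroup_iff] at hA hB ⊢
  rw [Matrix.star_eq_conjTranspose, kron_conjTranspose, ← Matrix.mul_kronecker_mul,
    ← Matrix.star_eq_conjTranspose (M := A), ← Matrix.star_eq_conjTranspose (M := B), hA, hB,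
    Matrix.one_kronecker_one]

lemma kron_norm_le (A : Matrix m m ℂ) (B : Matrix n n ℂ) : ‖A ⊗ₖ B‖ ≤ ‖A‖ * ‖B‖ := by
  have hsplit : A ⊗ₖ B = (A ⊗ₖ (1 : Matrix n n ℂ)) * ((1 : Matrix m m ℂ) ⊗ₖ B) := by
    rw [← Matrix.mul_kronecker_mul, mul_one, one_mul]
  have h1 : ‖A ⊗ₖ (1 : Matrix n n ℂ)‖ ≤ ‖A‖ := by
    rw [Matrix.kronecker_one]; exact bdconst_norm_le A
  have h2 : ‖(1 : Matrix m m ℂ) ⊗ₖ B‖ ≤ ‖B‖ := by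
    rw [Matrix.one_kronecker]
    rw [norm_reindex]
    exact bdconst_norm_le B
  calc ‖A ⊗ₖ B‖ ≤ ‖A ⊗ₖ (1 : Matrix n n ℂ)‖ * ‖(1 : Matrix m m ℂ) ⊗ₖ B‖ := by
        rw [hsplit]; exact norm_mul_le _ _
    _ ≤ ‖A‖ * ‖B‖ := mul_le_mul h1 h2 (norm_nonneg _) (norm_nonneg _)

end Kron


section Kpow
open Kronecker

lemma reindex_mul (e : m ≃ n) (M N : Matrix m m ℂ) :
    Matrix.reindex e e (M * N) = Matrix.reindex e e M * Matrix.reindex e e N := by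
  simp [Matrix.reindex_apply, Matrix.submatrix_mul_equiv]

lemma reindex_sub (e : m ≃ n) (M N : Matrix m m ℂ) :
    Matrix.reindex e e (M - N) = Matrix.reindex e e M - Matrix.reindex e e N := by
  ext i j; simp [Matrix.reindex_apply]

lemma reindex_one (e : m ≃ n) :
    Matrix.reindex e e (1 : Matrix m m ℂ) = 1 := by
  simp [Matrix.reindex_apply, Matrix.submatrix_one_equiv]

lemma kron_sub_left (A B : Matrix m m ℂ) (C : Matrix n n ℂ) :
    (A - B) ⊗ₖ C = A ⊗ₖ C - B ⊗ₖ C := by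
  ext ⟨i, k⟩ ⟨j, l⟩; simp [Matrix.kroneckerMap_apply, sub_mul]

lemma kron_sub_right (A : Matrix m m ℂ) (B C : Matrix n n ℂ) :
    A ⊗ₖ (B - C) = A ⊗ₖ B - A ⊗ₖ C := by
  ext ⟨i, k⟩ ⟨j, l⟩; simp [Matrix.kroneckerMap_apply, mul_sub]

variable (m) in
noncomputable def kpow (A : Matrix m m ℂ) : (k : ℕ) → Matrix (Fin k → m) (Fin k → m) ℂ
  | 0 => 1
  | (k+1) => Matrix.reindex (Fin.consEquiv fun _ : Fin (k+1) => m)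
      (Fin.consEquiv fun _ : Fin (k+1) => m) (A ⊗ₖ kpow A k)

lemma kpow_unitary (A : Matrix m m ℂ) (hA : A ∈ Matrix.unitaryGroup m ℂ) (k : ℕ) :
    kpow m A k ∈ Matrix.unitaryGroup (Fin k → m) ℂ := by
  induction k with
  | zero => exact one_mem _
  | succ k ih => exact reindex_unitary _ _ (kron_unitary _ _ hA ih)

lemma kpow_mul (A B : Matrix m m ℂ) (k : ℕ) :
    kpow m (A * B) k = kpow m A k * kpow m B k := by
  induction k with
  | zero => simp [kpow]
  | succ k ih =>
    show Matrix.reindex _ _ ((A * B) ⊗ₖ kpow m (A * B) k) = _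
    rw [ih, Matrix.mul_kronecker_mul, reindex_mul]
    rfl

lemma kpow_norm_sub_le (A B : Matrix m m ℂ) (hA : A ∈ Matrix.unitaryGroup m ℂ)
    (hB : B ∈ Matrix.unitaryGroup m ℂ) (k : ℕ) :
    ‖kpow m A k - kpow m B k‖ ≤ (k : ℝ) * ‖A - B‖ := by
  induction k with
  | zero => simp [kpow]
  | succ k ih =>
    show ‖Matrix.reindex _ _ (A ⊗ₖ kpow m A k) - Matrix.reindex _ _ (B ⊗ₖ kpow m B k)‖ ≤ _
    rw [← reindex_sub, norm_reindex]
    have hdecomp : A ⊗ₖ kpow m A k - B ⊗ₖ kpow m B k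
        = A ⊗ₖ (kpow m A k - kpow m B k) + (A - B) ⊗ₖ kpow m B k := by
      rw [kron_sub_right, kron_sub_left]; abel
    rw [hdecomp]
    have h1 : ‖A ⊗ₖ (kpow m A k - kpow m B k)‖ ≤ (k : ℝ) * ‖A - B‖ := by
      refine (kron_norm_le _ _).trans ?_
      have := unitary_norm_le A hA
      have h0 : (0:ℝ) ≤ ‖kpow m A k - kpow m B k‖ := norm_nonneg _
      nlinarith [norm_nonneg (A - B), Nat.cast_nonneg (α := ℝ) k]
    have h2 : ‖(A - B) ⊗ₖ kpow m B k‖ ≤ ‖A - B‖ := by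
      refine (kron_norm_le _ _).trans ?_
      have := unitary_norm_le _ (kpow_unitary B hB k)
      nlinarith [norm_nonneg (A - B)]
    calc ‖A ⊗ₖ (kpow m A k - kpow m B k) + (A - B) ⊗ₖ kpow m B k‖
        ≤ ‖A ⊗ₖ (kpow m A k - kpow m B k)‖ + ‖(A - B) ⊗ₖ kpow m B k‖ := norm_add_le _ _
      _ ≤ (k : ℝ) * ‖A - B‖ + ‖A - B‖ := add_le_add h1 h2
      _ = ((k : ℕ) + 1 : ℝ) * ‖A - B‖ := by ring
      _ = ((k + 1 : ℕ) : ℝ) * ‖A - B‖ := by push_cast; ring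

lemma kron_mulVec (A : Matrix m m ℂ) (B : Matrix n n ℂ) (y : m → ℂ) (z : n → ℂ) :
    (A ⊗ₖ B) *ᵥ (fun pq : m × n => y pq.1 * z pq.2)
      = fun pq : m × n => (A *ᵥ y) pq.1 * (B *ᵥ z) pq.2 := by
  funext ⟨i, k⟩
  simp only [Matrix.mulVec, dotProduct]
  rw [Fintype.sum_prod_type]
  rw [Finset.sum_mul_sum]
  refine Finset.sum_congr rfl fun j _ => Finset.sum_congr rfl fun l _ => ?_
  simp [Matrix.kroneckerMap_apply]; ring

lemma kpow_mulVec_eigen (A : Matrix m m ℂ) (x : m → ℂ) (μ : ℂ) (h : A *ᵥ x = μ • x) (k : ℕ) :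
    kpow m A k *ᵥ (fun f => ∏ j, x (f j)) = (μ ^ k) • fun f : Fin k → m => ∏ j, x (f j) := by
  induction k with
  | zero =>
    funext f
    simp [kpow, Matrix.one_mulVec]
  | succ k ih =>
    set E := Fin.consEquiv (fun _ : Fin (k+1) => m) with hE
    have hk : kpow m A (k+1) = Matrix.reindex E E (A ⊗ₖ kpow m A k) := rfl
    rw [hk, Matrix.reindex_apply, Matrix.submatrix_mulVec_equiv, Equiv.symm_symm]
    have hcomp : ((fun f : Fin (k+1) → m => ∏ j, x (f j)) ∘ ⇑E)
        = fun pq : m × (Fin k → m) => x pq.1 * ∏ j, x (pq.2 j) := by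
      funext pq
      obtain ⟨a, f⟩ := pq
      have h1 : (fun f : Fin (k+1) → m => ∏ j, x (f j)) (E (a, f)) = ∏ j : Fin (k+1), x ((Fin.cons a f : Fin (k+1) → m) j) := rfl
      simp only [Function.comp_apply, h1]
      have h2 : (fun j => x ((Fin.cons a f : Fin (k+1) → m) j)) = Fin.cons (x a) (x ∘ f) := by
        funext j
        exact congrFun (Fin.comp_cons x a f) j
      rw [h2, Fin.prod_cons]
      rfl
    rw [hcomp]
    have h3 := kron_mulVec A (kpow m A k) x (fun f : Fin k → m => ∏ j, x (f j))
    show ((A ⊗ₖ kpow m A k) *ᵥ fun pq : m × (Fin k → m) =>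
        x pq.1 * (fun f : Fin k → m => ∏ j, x (f j)) pq.2) ∘ ⇑E.symm = _
    rw [h3, h, ih]
    funext f
    show (μ • x) ((E.symm f).1) * (μ ^ k • fun f : Fin k → m => ∏ j, x (f j)) ((E.symm f).2)
      = μ ^ (k + 1) * ∏ j : Fin (k+1), x (f j)
    have hsymm : E.symm f = (f 0, Fin.tail f) := rfl
    rw [hsymm]
    simp only [Pi.smul_apply, smul_eq_mul]
    rw [Fin.prod_univ_succ]
    show μ * x (f 0) * (μ ^ k * ∏ j : Fin k, x (Fin.tail f j)) = _
    have ht : (fun j : Fin k => x (Fin.tail f j)) = fun j : Fin k => x (f j.succ) := rfl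
    rw [ht]
    ring

end Kpow


section Eigen

lemma norm_ge_of_eigen (B : Matrix n n ℂ) {x : n → ℂ} (hx : x ≠ 0) {μ : ℂ}
    (h : B *ᵥ x = μ • x) : ‖μ‖ ≤ ‖B‖ := by
  have hS : 0 < ∑ i, ‖x i‖ ^ 2 := by
    obtain ⟨i₀, hi₀⟩ : ∃ i, x i ≠ 0 := by
      by_contra hc; push_neg at hc; exact hx (funext hc)
    refine Finset.sum_pos' (fun i _ => sq_nonneg _) ⟨i₀, Finset.mem_univ i₀, ?_⟩
    have : 0 < ‖x i₀‖ := norm_pos_iff.mpr hi₀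
    positivity
  have hle := sq_le_norm_mulVec B le_rfl x
  rw [h] at hle
  have hsum : ∑ i, ‖(μ • x) i‖ ^ 2 = ‖μ‖ ^ 2 * ∑ i, ‖x i‖ ^ 2 := by
    rw [Finset.mul_sum]
    refine Finset.sum_congr rfl fun i _ => ?_
    simp [norm_smul, mul_pow]
  rw [hsum] at hle
  have h2 : ‖μ‖ ^ 2 ≤ ‖B‖ ^ 2 := by
    by_contra hc; push_neg at hc; nlinarith
  nlinarith [norm_nonneg μ, norm_nonneg B]

lemma exists_eigen_of_mem_spectrum (A : Matrix n n ℂ) {μ : ℂ} (h : μ ∈ spectrum ℂ A) :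
    ∃ x : n → ℂ, x ≠ 0 ∧ A *ᵥ x = μ • x := by
  have hsp : μ ∈ spectrum ℂ (Matrix.toLinAlgEquiv' A) := by
    rwa [AlgEquiv.spectrum_eq]
  have hev : Module.End.HasEigenvalue (Matrix.toLinAlgEquiv' A : Module.End ℂ (n → ℂ)) μ :=
    Module.End.HasEigenvalue.of_mem_spectrum hsp
  obtain ⟨x, hx⟩ := hev.exists_hasEigenvector
  refine ⟨x, hx.right, ?_⟩
  have := hx.apply_eq_smul
  rwa [show (Matrix.toLinAlgEquiv' A) x = A *ᵥ x from rfl] at this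

lemma isStarNormal_sub_one_of_unitary (u : Matrix n n ℂ) (hu : u ∈ Matrix.unitaryGroup n ℂ) :
    IsStarNormal (u - (1 : Matrix n n ℂ)) := by
  have h1 : star u * u = 1 := Matrix.mem_unitaryGroup_iff'.mp (by simpa using hu)
  have h2 : u * star u = 1 := Matrix.mem_unitaryGroup_iff.mp (by simpa using hu)
  constructor
  show star (u - 1) * (u - 1) = (u - 1) * star (u - 1)
  simp only [star_sub, star_one, sub_mul, mul_sub, one_mul, mul_one, h1, h2]
  abel

lemma mem_unitary_of_mem_unitaryGroup (u : Matrix n n ℂ) (hu : u ∈ Matrix.unitaryGroup n ℂ) :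
    u ∈ unitary (Matrix n n ℂ) := by
  rw [Unitary.mem_iff]
  exact ⟨Matrix.mem_unitaryGroup_iff'.mp hu, Matrix.mem_unitaryGroup_iff.mp hu⟩

lemma exists_spectrum_far (u : Matrix n n ℂ) (hu : u ∈ Matrix.unitaryGroup n ℂ) {δ : ℝ}
    (hδ0 : 0 ≤ δ) (hδ : δ < ‖u - (1 : Matrix n n ℂ)‖) :
    ∃ μ : ℂ, μ ∈ spectrum ℂ u ∧ ‖μ‖ = 1 ∧ δ < ‖μ - 1‖ := by
  haveI := isStarNormal_sub_one_of_unitary u hu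
  have hsr : spectralRadius ℂ (u - 1) = ‖u - (1 : Matrix n n ℂ)‖₊ :=
    IsStarNormal.spectralRadius_eq_nnnorm _
  have hex : ∃ ν ∈ spectrum ℂ (u - (1 : Matrix n n ℂ)), δ < ‖ν‖ := by
    by_contra hc
    push_neg at hc
    have hle : spectralRadius ℂ (u - (1 : Matrix n n ℂ)) ≤ ENNReal.ofReal δ := by
      refine iSup₂_le fun ν hν => ?_
      have := hc ν hν
      simp only [ENNReal.ofReal]
      rw [ENNReal.coe_le_coe]
      exact Real.le_toNNReal_iff_coe_le hδ0 |>.mpr (by simpa using this)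
    rw [hsr] at hle
    have hle1 : ‖u - (1 : Matrix n n ℂ)‖₊ ≤ δ.toNNReal := by
      rw [ENNReal.ofReal] at hle; exact_mod_cast hle
    have hle2 := NNReal.coe_le_coe.mpr hle1
    rw [coe_nnnorm, Real.coe_toNNReal δ hδ0] at hle2
    linarith
  obtain ⟨ν, hν, hνδ⟩ := hex
  refine ⟨ν + 1, ?_, ?_, by simpa using hνδ⟩
  · rw [spectrum.mem_iff] at hν ⊢
    have heq : algebraMap ℂ (Matrix n n ℂ) (ν + 1) - u
        = algebraMap ℂ (Matrix n n ℂ) ν - (u - 1) := by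
      rw [map_add, _root_.map_one]; abel
    rwa [heq]
  · have := spectrum.subset_circle_of_unitary (𝕜 := ℂ) (mem_unitary_of_mem_unitaryGroup u hu)
    have hmem : (ν + 1) ∈ spectrum ℂ u := by
      rw [spectrum.mem_iff] at hν ⊢
      have heq : algebraMap ℂ (Matrix n n ℂ) (ν + 1) - u
          = algebraMap ℂ (Matrix n n ℂ) ν - (u - 1) := by
        rw [map_add, _root_.map_one]; abel
      rwa [heq]
    have := this hmem
    simpa [mem_sphere_zero_iff_norm] using this

end Eigen


section Trig
open Real

lemma sq_norm_sub_one (z : ℂ) (hz : ‖z‖ = 1) : ‖z - 1‖ ^ 2 = 2 - 2 * z.re := by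
  have h1 : ‖z - 1‖ ^ 2 = Complex.normSq (z - 1) := Complex.sq_norm (z - 1)
  have h2 : ‖z‖ ^ 2 = Complex.normSq z := Complex.sq_norm z
  have h3 : ‖z‖ = 1 := hz
  simp only [Complex.normSq_apply, Complex.sub_re, Complex.sub_im, Complex.one_re,
    Complex.one_im] at h1 h2
  show ‖z - 1‖ ^ 2 = 2 - 2 * z.re
  rw [h1]
  rw [h3] at h2
  nlinarith

lemma norm_pow_sub_one (μ : ℂ) (hμ : ‖μ‖ = 1) (k : ℕ) :
    ‖μ ^ k - 1‖ ^ 2 = 2 - 2 * Real.cos (k * Complex.arg μ) := by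
  have hexp : μ = Complex.exp (Complex.arg μ * Complex.I) := by
    have h0 := Complex.norm_mul_exp_arg_mul_I μ
    rw [hμ, Complex.ofReal_one, one_mul] at h0
    exact h0.symm
  have hpow : μ ^ k = Complex.exp ((k * Complex.arg μ : ℝ) * Complex.I) := by
    conv_lhs => rw [hexp]
    rw [← Complex.exp_nat_mul]
    congr 1
    push_cast
    ring
  have hnorm : ‖μ ^ k‖ = 1 := by rw [norm_pow, hμ, one_pow]
  rw [sq_norm_sub_one _ hnorm, hpow, Complex.exp_ofReal_mul_I_re]

lemma exists_good_power {μ : ℂ} (hμ : ‖μ‖ = 1) {δ : ℝ} (hδ0 : 0 < δ) (hδh : δ ≤ 1/2)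
    (hfar : δ < ‖μ - 1‖) :
    ∃ k : ℕ, 1 ≤ k ∧ k ≤ Nat.ceil (Real.pi / 2 / δ) ∧ 1 < ‖μ ^ k - 1‖ := by
  set θ' := Complex.arg μ with hθ'
  set θ := |θ'| with hθ
  have hcosk : ∀ k : ℕ, ‖μ ^ k - 1‖ ^ 2 = 2 - 2 * Real.cos (k * θ) := by
    intro k
    rw [norm_pow_sub_one μ hμ k]
    congr 1
    have : Real.cos (k * θ) = Real.cos |(k : ℝ) * θ'| := by
      rw [hθ, abs_mul, Nat.abs_cast]
    rw [this, Real.cos_abs]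
  have hθπ : θ ≤ Real.pi := Complex.abs_arg_le_pi μ
  have hθ0 : 0 ≤ θ := abs_nonneg _
  -- cos θ < 1 - δ^2/2
  have hsq : δ ^ 2 < ‖μ - 1‖ ^ 2 := by nlinarith [norm_nonneg (μ - 1)]
  have h1 : ‖μ - 1‖ ^ 2 = 2 - 2 * Real.cos θ := by
    have := hcosk 1
    simpa using this
  have hcosθ : Real.cos θ < 1 - δ ^ 2 / 2 := by nlinarith
  have hθδ : δ < θ := by
    by_contra hcon
    push_neg at hcon
    have hcδ : 1 - δ ^ 2 / 2 ≤ Real.cos δ := Real.one_sub_sq_div_two_le_cos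
    have : Real.cos δ ≤ Real.cos θ := by
      rcases eq_or_lt_of_le hcon with h | h
      · rw [h]
      · exact le_of_lt (Real.cos_lt_cos_of_nonneg_of_le_pi hθ0 (by linarith [Real.pi_gt_three]) h)
    linarith
  have hK1 : 1 ≤ Nat.ceil (Real.pi / 2 / δ) := by
    rw [Nat.one_le_iff_ne_zero, ← Nat.pos_iff_ne_zero, Nat.ceil_pos]
    positivity
  rcases le_or_gt (Real.cos θ) 0 with hcos | hcos
  · refine ⟨1, le_rfl, hK1, ?_⟩
    have h2 := hcosk 1
    rw [Nat.cast_one, one_mul] at h2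
    have : 1 < ‖μ ^ 1 - 1‖ ^ 2 := by rw [h2]; nlinarith
    have hn : 0 ≤ ‖μ ^ 1 - 1‖ := norm_nonneg _
    nlinarith
  · have hθhalf : θ < Real.pi / 2 := by
      by_contra hcon
      push_neg at hcon
      have := Real.cos_nonpos_of_pi_div_two_le_of_le hcon (by linarith [Real.pi_pos])
      linarith
    set k := Nat.ceil (Real.pi / 2 / θ) with hk
    have hθpos : 0 < θ := lt_trans hδ0 hθδ
    have hk1 : 1 ≤ k := by
      rw [hk, Nat.one_le_iff_ne_zero, ← Nat.pos_iff_ne_zero, Nat.ceil_pos]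
      positivity
    have hkθlo : Real.pi / 2 ≤ k * θ := by
      have := Nat.le_ceil (Real.pi / 2 / θ)
      calc Real.pi / 2 = (Real.pi / 2 / θ) * θ := by field_simp
        _ ≤ k * θ := by exact mul_le_mul_of_nonneg_right this hθ0
    have hkθhi : (k : ℝ) * θ < Real.pi := by
      have hklt : (k : ℝ) < Real.pi / 2 / θ + 1 := Nat.ceil_lt_add_one (by positivity)
      have : (k : ℝ) * θ < (Real.pi / 2 / θ + 1) * θ := by
        exact mul_lt_mul_of_pos_right hklt hθpos
      have heq : (Real.pi / 2 / θ + 1) * θ = Real.pi / 2 + θ := by field_simp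
      rw [heq] at this
      linarith
    have hcosk0 : Real.cos (k * θ) ≤ 0 :=
      Real.cos_nonpos_of_pi_div_two_le_of_le hkθlo (by linarith [Real.pi_pos])
    refine ⟨k, hk1, ?_, ?_⟩
    · rw [hk]
      exact Nat.ceil_mono (by
        apply div_le_div_of_nonneg_left _ hδ0 hθδ.le
        positivity)
    · have h2 : ‖μ ^ k - 1‖ ^ 2 = 2 - 2 * Real.cos (k * θ) := hcosk k
      have : 1 < ‖μ ^ k - 1‖ ^ 2 := by rw [h2]; nlinarith
      have hn : 0 ≤ ‖μ ^ k - 1‖ := norm_nonneg _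
      nlinarith

end Trig


section Boost

variable {G : Type*} [Group G]

set_option maxHeartbeats 1000000 in
lemma boost
    (H : ∀ F : Finset G, ∃ δ > (0 : ℝ), ∀ ε > (0 : ℝ),
      ∃ (n : ℕ) (α : G → Matrix.unitaryGroup (Fin n) ℂ),
        (∀ g ∈ F, ∀ h ∈ F,
          matOpNorm ((α (g * h) : Matrix (Fin n) (Fin n) ℂ) -
            (α g : Matrix (Fin n) (Fin n) ℂ) * (α h : Matrix (Fin n) (Fin n) ℂ)) < ε) ∧
        (∀ g ∈ F, g ≠ 1 →
          matOpNorm ((α g : Matrix (Fin n) (Fin n) ℂ) - 1) > δ)) :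
    ∀ F : Finset G, ∀ ε > (0 : ℝ),
      ∃ (n : ℕ) (α : G → Matrix.unitaryGroup (Fin n) ℂ),
        (∀ g ∈ F, ∀ h ∈ F,
          matOpNorm ((α (g * h) : Matrix (Fin n) (Fin n) ℂ) -
            (α g : Matrix (Fin n) (Fin n) ℂ) * (α h : Matrix (Fin n) (Fin n) ℂ)) < ε) ∧
        (∀ g ∈ F, g ≠ 1 →
          matOpNorm ((α g : Matrix (Fin n) (Fin n) ℂ) - 1) > 1) := by
  classical
  intro F ε hε
  obtain ⟨δ₀, hδ₀, hF⟩ := H F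
  set δ : ℝ := min δ₀ (1/2) with hδdef
  have hδpos : 0 < δ := lt_min hδ₀ (by norm_num)
  have hδhalf : δ ≤ 1/2 := min_le_right _ _
  set K : ℕ := Nat.ceil (Real.pi / 2 / δ) with hKdef
  have hK1 : 1 ≤ K := by
    rw [hKdef, Nat.one_le_iff_ne_zero, ← Nat.pos_iff_ne_zero, Nat.ceil_pos]
    have := Real.pi_pos
    positivity
  have hKpos : (0 : ℝ) < K := by exact_mod_cast hK1
  set ε' : ℝ := ε / (2 * K) with hε'def
  have hε' : 0 < ε' := by positivity
  obtain ⟨n, α, hmult, hnt⟩ := hF ε' hε'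
  set ι := {x : G // x ∈ F.erase 1} with hι
  have hdata : ∀ s : ι, ∃ (k : ℕ) (μ : ℂ) (x : Fin n → ℂ),
      1 ≤ k ∧ k ≤ K ∧ 1 < ‖μ ^ k - 1‖ ∧ x ≠ 0 ∧
      (α s.1 : Matrix (Fin n) (Fin n) ℂ) *ᵥ x = μ • x := by
    intro s
    have hs := s.2
    rw [Finset.mem_erase] at hs
    have hfar : δ < ‖(α s.1 : Matrix (Fin n) (Fin n) ℂ) - 1‖ := by
      have := hnt s.1 hs.2 hs.1
      rw [matN] at this
      exact lt_of_le_of_lt (min_le_left _ _) this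
    obtain ⟨μ, hμsp, hμ1, hμfar⟩ :=
      exists_spectrum_far (α s.1 : Matrix (Fin n) (Fin n) ℂ) (α s.1).2 hδpos.le hfar
    obtain ⟨k, hk1, hkK, hkfar⟩ := exists_good_power hμ1 hδpos hδhalf hμfar
    obtain ⟨x, hx0, heig⟩ := exists_eigen_of_mem_spectrum _ hμsp
    exact ⟨k, μ, x, hk1, hkK, hkfar, hx0, heig⟩
  choose kf μf xf hk1 hkK hkfar hx0 heig using hdata
  set T := Σ s : ι, (Fin (kf s) → Fin n) with hT
  set e : T ≃ Fin (Fintype.card T) := Fintype.equivFin T with he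
  set N := Fintype.card T with hN
  set Bm : G → Matrix (Fin N) (Fin N) ℂ := fun g =>
    Matrix.reindex e e (Matrix.blockDiagonal' fun s : ι =>
      kpow (Fin n) (α g : Matrix (Fin n) (Fin n) ℂ) (kf s)) with hBm
  have hBu : ∀ g : G, Bm g ∈ Matrix.unitaryGroup (Fin N) ℂ := by
    intro g
    exact reindex_unitary _ _ (bd'_unitary _ fun s => kpow_unitary _ (α g).2 _)
  set β : G → Matrix.unitaryGroup (Fin N) ℂ := fun g => ⟨Bm g, hBu g⟩ with hβ
  refine ⟨N, β, ?_, ?_⟩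
  · intro g hg h hh
    have hdiff : (β (g * h) : Matrix (Fin N) (Fin N) ℂ) -
        (β g : Matrix (Fin N) (Fin N) ℂ) * (β h : Matrix (Fin N) (Fin N) ℂ)
        = Matrix.reindex e e (Matrix.blockDiagonal' fun s : ι =>
            kpow (Fin n) (α (g * h) : Matrix (Fin n) (Fin n) ℂ) (kf s) -
            kpow (Fin n) ((α g : Matrix (Fin n) (Fin n) ℂ) *
              (α h : Matrix (Fin n) (Fin n) ℂ)) (kf s)) := by
      show Bm (g * h) - Bm g * Bm h = _
      rw [hBm]
      rw [← reindex_mul, ← reindex_sub]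
      congr 1
      rw [← Matrix.blockDiagonal'_mul, ← Matrix.blockDiagonal'_sub]
      have hfun : ((fun s : ι => kpow (Fin n) (α (g * h) : Matrix (Fin n) (Fin n) ℂ) (kf s)) -
          fun s : ι => kpow (Fin n) (α g : Matrix (Fin n) (Fin n) ℂ) (kf s) *
            kpow (Fin n) (α h : Matrix (Fin n) (Fin n) ℂ) (kf s))
          = fun s : ι => kpow (Fin n) (α (g * h) : Matrix (Fin n) (Fin n) ℂ) (kf s) -
            kpow (Fin n) ((α g : Matrix (Fin n) (Fin n) ℂ) *
              (α h : Matrix (Fin n) (Fin n) ℂ)) (kf s) := by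
        funext s
        rw [Pi.sub_apply, kpow_mul]
      rw [hfun]
    rw [matN, hdiff, norm_reindex]
    have hb : ∀ s : ι, ‖kpow (Fin n) (α (g * h) : Matrix (Fin n) (Fin n) ℂ) (kf s) -
        kpow (Fin n) ((α g : Matrix (Fin n) (Fin n) ℂ) *
          (α h : Matrix (Fin n) (Fin n) ℂ)) (kf s)‖ ≤ ε / 2 := by
      intro s
      have hu1 : ((α g : Matrix (Fin n) (Fin n) ℂ) * (α h : Matrix (Fin n) (Fin n) ℂ))
          ∈ Matrix.unitaryGroup (Fin n) ℂ := mul_mem (α g).2 (α h).2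
      have := kpow_norm_sub_le (α (g * h) : Matrix (Fin n) (Fin n) ℂ)
        ((α g : Matrix (Fin n) (Fin n) ℂ) * (α h : Matrix (Fin n) (Fin n) ℂ))
        (α (g * h)).2 hu1 (kf s)
      refine this.trans ?_
      have hm := hmult g hg h hh
      rw [matN] at hm
      have hkle : (kf s : ℝ) ≤ K := by exact_mod_cast hkK s
      have hnn : (0 : ℝ) ≤ ‖(α (g * h) : Matrix (Fin n) (Fin n) ℂ) -
          (α g : Matrix (Fin n) (Fin n) ℂ) * (α h : Matrix (Fin n) (Fin n) ℂ)‖ := norm_nonneg _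
      calc (kf s : ℝ) * ‖(α (g * h) : Matrix (Fin n) (Fin n) ℂ) -
          (α g : Matrix (Fin n) (Fin n) ℂ) * (α h : Matrix (Fin n) (Fin n) ℂ)‖
          ≤ (K : ℝ) * ε' := by
            apply mul_le_mul hkle hm.le hnn (le_of_lt hKpos)
        _ = ε / 2 := by rw [hε'def]; field_simp
    have := bd'_norm_le _ (by positivity) hb
    linarith
  · intro g hgF hg1
    have hgs : g ∈ F.erase 1 := Finset.mem_erase.mpr ⟨hg1, hgF⟩
    set s₀ : ι := ⟨g, hgs⟩ with hs₀
    have hdiff : (β g : Matrix (Fin N) (Fin N) ℂ) - 1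
        = Matrix.reindex e e (Matrix.blockDiagonal' fun s : ι =>
            kpow (Fin n) (α g : Matrix (Fin n) (Fin n) ℂ) (kf s) - 1) := by
      show Bm g - 1 = _
      rw [hBm]
      have h1 : (1 : Matrix (Fin N) (Fin N) ℂ) = Matrix.reindex e e 1 := (reindex_one e).symm
      rw [h1, ← reindex_sub]
      congr 1
      have h2 : (1 : Matrix T T ℂ) = Matrix.blockDiagonal'
          (fun s : ι => (1 : Matrix (Fin (kf s) → Fin n) (Fin (kf s) → Fin n) ℂ)) :=
        Matrix.blockDiagonal'_one.symm
      rw [h2, ← Matrix.blockDiagonal'_sub]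
      have hfun : ((fun s : ι => kpow (Fin n) (α g : Matrix (Fin n) (Fin n) ℂ) (kf s)) -
          fun s : ι => (1 : Matrix (Fin (kf s) → Fin n) (Fin (kf s) → Fin n) ℂ))
          = fun s : ι => kpow (Fin n) (α g : Matrix (Fin n) (Fin n) ℂ) (kf s) - 1 := by
        funext s
        rw [Pi.sub_apply]
      rw [hfun]
    rw [matN, hdiff, norm_reindex]
    have hlow : ‖kpow (Fin n) (α g : Matrix (Fin n) (Fin n) ℂ) (kf s₀) - 1‖
        ≤ ‖Matrix.blockDiagonal' fun s : ι =>
            kpow (Fin n) (α g : Matrix (Fin n) (Fin n) ℂ) (kf s) - 1‖ := by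
      exact bd'_norm_ge (fun s : ι =>
        kpow (Fin n) (α g : Matrix (Fin n) (Fin n) ℂ) (kf s) - 1) s₀
    refine lt_of_lt_of_le (lt_of_lt_of_le (hkfar s₀) ?_) hlow
    obtain ⟨i₀, hi₀⟩ : ∃ i, xf s₀ i ≠ 0 := by
      by_contra hc; push_neg at hc; exact (hx0 s₀) (funext hc)
    have hxt0 : (fun f : Fin (kf s₀) → Fin n => ∏ j, xf s₀ (f j)) ≠ 0 := by
      intro hcon
      have h5 := congrFun hcon (fun _ => i₀)
      simp only [Pi.zero_apply] at h5
      rw [Finset.prod_const] at h5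
      exact pow_ne_zero _ hi₀ h5
    have heigvec := kpow_mulVec_eigen (α g : Matrix (Fin n) (Fin n) ℂ) (xf s₀) (μf s₀)
      (heig s₀) (kf s₀)
    have heig2 : (kpow (Fin n) (α g : Matrix (Fin n) (Fin n) ℂ) (kf s₀) - 1) *ᵥ
        (fun f : Fin (kf s₀) → Fin n => ∏ j, xf s₀ (f j))
        = (μf s₀ ^ kf s₀ - 1) • fun f : Fin (kf s₀) → Fin n => ∏ j, xf s₀ (f j) := by
      rw [Matrix.sub_mulVec, Matrix.one_mulVec, heigvec, sub_smul, one_smul]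
    exact norm_ge_of_eigen _ hxt0 heig2

end Boost


lemma freq_of_not_tendsto {f : ℕ → ℝ} (h0 : ∀ m, 0 ≤ f m)
    (h : ¬ Tendsto f atTop (nhds 0)) : ∃ δ > (0 : ℝ), ∀ M : ℕ, ∃ m ≥ M, δ ≤ f m := by
  rw [Metric.tendsto_atTop] at h
  push_neg at h
  obtain ⟨δ, hδ, hfr⟩ := h
  refine ⟨δ, hδ, fun M => ?_⟩
  obtain ⟨m, hm, hd⟩ := hfr M
  refine ⟨m, hm, ?_⟩
  rw [Real.dist_eq, sub_zero, abs_of_nonneg (h0 m)] at hd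
  exact hd

end StmtAux

set_option maxHeartbeats 1000000 in
theorem stmt0 (G : Type*) [Group G] [Countable G] :
    (∃ (d : ℕ → ℕ) (α : ∀ m : ℕ, G → Matrix.unitaryGroup (Fin (d m)) ℂ),
      (∀ g h : G,
        Tendsto (fun m : ℕ =>
          matOpNorm ((α m (g * h) : Matrix (Fin (d m)) (Fin (d m)) ℂ) -
            (α m g : Matrix (Fin (d m)) (Fin (d m)) ℂ) *
            (α m h : Matrix (Fin (d m)) (Fin (d m)) ℂ)))
          atTop (nhds 0)) ∧
      (∀ g : G, g ≠ 1 →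
        ¬ Tendsto (fun m : ℕ =>
            matOpNorm ((α m g : Matrix (Fin (d m)) (Fin (d m)) ℂ) - 1))
          atTop (nhds 0)))
    ↔
    (∀ F : Finset G, ∃ δ > (0 : ℝ), ∀ ε > (0 : ℝ),
      ∃ (n : ℕ) (α : G → Matrix.unitaryGroup (Fin n) ℂ),
        (∀ g ∈ F, ∀ h ∈ F,
          matOpNorm ((α (g * h) : Matrix (Fin n) (Fin n) ℂ) -
            (α g : Matrix (Fin n) (Fin n) ℂ) * (α h : Matrix (Fin n) (Fin n) ℂ)) < ε) ∧
        (∀ g ∈ F, g ≠ 1 →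
          matOpNorm ((α g : Matrix (Fin n) (Fin n) ℂ) - 1) > δ)) := by
    open StmtAux in
  open scoped Matrix.Norms.L2Operator in
  constructor
  · rintro ⟨d, a, hmult, hnt⟩ F
    classical
    by_cases hS : (F.erase 1).Nonempty
    · -- nontrivial case
      have hfreq : ∀ g : G, ∃ δ : ℝ, 0 < δ ∧ (g ∈ F.erase 1 →
          ∀ M : ℕ, ∃ m ≥ M, δ ≤ matOpNorm ((a m g : Matrix (Fin (d m)) (Fin (d m)) ℂ) - 1)) := by
        intro g
        by_cases hg : g ∈ F.erase 1
        · have h1 : g ≠ 1 := (Finset.mem_erase.mp hg).1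
          obtain ⟨δ, hδ, hf⟩ := StmtAux.freq_of_not_tendsto
            (fun m => by rw [StmtAux.matN]; exact norm_nonneg _) (hnt g h1)
          exact ⟨δ, hδ, fun _ => hf⟩
        · exact ⟨1, one_pos, fun hg' => absurd hg' hg⟩
      choose δf hδf hδfreq using hfreq
      set δ : ℝ := (F.erase 1).inf' hS δf with hδdef
      have hδpos : 0 < δ := by
        rw [hδdef, Finset.lt_inf'_iff]
        exact fun b _ => hδf b
      refine ⟨δ/2, by positivity, fun ε hε => ?_⟩
      have hev : ∀ᶠ m in atTop, ∀ g ∈ F, ∀ h ∈ F,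
          matOpNorm ((a m (g * h) : Matrix (Fin (d m)) (Fin (d m)) ℂ) -
            (a m g : Matrix (Fin (d m)) (Fin (d m)) ℂ) *
            (a m h : Matrix (Fin (d m)) (Fin (d m)) ℂ)) < ε/2 := by
        rw [Filter.eventually_all_finset]
        intro g hg
        rw [Filter.eventually_all_finset]
        intro h hh
        exact (hmult g h).eventually_lt_const (by positivity)
      obtain ⟨M, hM⟩ := Filter.eventually_atTop.mp hev
      set ι := {x // x ∈ F.erase 1} with hι
      have hpick : ∀ s : ι, ∃ m, M ≤ m ∧
          δf s.1 ≤ matOpNorm ((a m s.1 : Matrix (Fin (d m)) (Fin (d m)) ℂ) - 1) := by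
        intro s
        obtain ⟨m, hm1, hm2⟩ := hδfreq s.1 s.2 M
        exact ⟨m, hm1, hm2⟩
      choose mf hmf1 hmf2 using hpick
      set T := Σ s : ι, Fin (d (mf s)) with hT
      set e : T ≃ Fin (Fintype.card T) := Fintype.equivFin T with he
      set N := Fintype.card T with hN
      set Bm : G → Matrix (Fin N) (Fin N) ℂ := fun g =>
        Matrix.reindex e e (Matrix.blockDiagonal' fun s : ι =>
          (a (mf s) g : Matrix (Fin (d (mf s))) (Fin (d (mf s))) ℂ)) with hBm
      have hBu : ∀ g : G, Bm g ∈ Matrix.unitaryGroup (Fin N) ℂ := fun g =>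
        StmtAux.reindex_unitary _ _ (StmtAux.bd'_unitary _ fun s => (a (mf s) g).2)
      refine ⟨N, fun g => ⟨Bm g, hBu g⟩, ?_, ?_⟩
      · intro g hg h hh
        have hdiff : Bm (g * h) - Bm g * Bm h
            = Matrix.reindex e e (Matrix.blockDiagonal' fun s : ι =>
                (a (mf s) (g * h) : Matrix (Fin (d (mf s))) (Fin (d (mf s))) ℂ) -
                (a (mf s) g : Matrix (Fin (d (mf s))) (Fin (d (mf s))) ℂ) *
                (a (mf s) h : Matrix (Fin (d (mf s))) (Fin (d (mf s))) ℂ)) := by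
          rw [hBm]
          rw [← StmtAux.reindex_mul, ← StmtAux.reindex_sub]
          congr 1
          rw [← Matrix.blockDiagonal'_mul, ← Matrix.blockDiagonal'_sub]
          congr 1
        show matOpNorm (Bm (g * h) - Bm g * Bm h) < ε
        rw [StmtAux.matN, hdiff, StmtAux.norm_reindex]
        have hb := StmtAux.bd'_norm_le (fun s : ι =>
          (a (mf s) (g * h) : Matrix (Fin (d (mf s))) (Fin (d (mf s))) ℂ) -
          (a (mf s) g : Matrix (Fin (d (mf s))) (Fin (d (mf s))) ℂ) *
          (a (mf s) h : Matrix (Fin (d (mf s))) (Fin (d (mf s))) ℂ))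
          (c := ε/2) (by positivity) (fun s => by
            have := hM (mf s) (hmf1 s) g hg h hh
            rw [StmtAux.matN] at this
            exact this.le)
        linarith
      · intro g hgF hg1
        have hgs : g ∈ F.erase 1 := Finset.mem_erase.mpr ⟨hg1, hgF⟩
        have hdiff : Bm g - 1
            = Matrix.reindex e e (Matrix.blockDiagonal' fun s : ι =>
                (a (mf s) g : Matrix (Fin (d (mf s))) (Fin (d (mf s))) ℂ) - 1) := by
          rw [hBm]
          have h1 : (1 : Matrix (Fin N) (Fin N) ℂ) = Matrix.reindex e e 1 :=
            (StmtAux.reindex_one e).symm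
          rw [h1, ← StmtAux.reindex_sub]
          congr 1
          have h2 : (1 : Matrix T T ℂ) = Matrix.blockDiagonal'
              (fun s : ι => (1 : Matrix (Fin (d (mf s))) (Fin (d (mf s))) ℂ)) :=
            Matrix.blockDiagonal'_one.symm
          rw [h2, ← Matrix.blockDiagonal'_sub]
          have hfun : ((fun s : ι => (a (mf s) g : Matrix (Fin (d (mf s))) (Fin (d (mf s))) ℂ)) -
              fun s : ι => (1 : Matrix (Fin (d (mf s))) (Fin (d (mf s))) ℂ))
              = fun s : ι => (a (mf s) g : Matrix (Fin (d (mf s))) (Fin (d (mf s))) ℂ) - 1 := by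
            funext s
            rw [Pi.sub_apply]
          rw [hfun]
        show matOpNorm (Bm g - 1) > δ/2
        rw [StmtAux.matN, hdiff, StmtAux.norm_reindex]
        have hlow := StmtAux.bd'_norm_ge (fun s : ι =>
          (a (mf s) g : Matrix (Fin (d (mf s))) (Fin (d (mf s))) ℂ) - 1) ⟨g, hgs⟩
        have hfr := hmf2 ⟨g, hgs⟩
        rw [StmtAux.matN] at hfr
        have hinf : δ ≤ δf g := Finset.inf'_le δf hgs
        calc δ/2 < δ := by linarith
          _ ≤ δf g := hinf
          _ ≤ ‖(a (mf ⟨g, hgs⟩) g : Matrix (Fin (d (mf ⟨g, hgs⟩))) (Fin (d (mf ⟨g, hgs⟩))) ℂ) - 1‖ := hfr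
          _ ≤ _ := hlow
    · -- F.erase 1 empty
      refine ⟨1, one_pos, fun ε hε => ⟨0, fun _ => 1, ?_, ?_⟩⟩
      · intro g hg h hh
        have hz : ((1 : Matrix.unitaryGroup (Fin 0) ℂ) : Matrix (Fin 0) (Fin 0) ℂ) -
            ((1 : Matrix.unitaryGroup (Fin 0) ℂ) : Matrix (Fin 0) (Fin 0) ℂ) *
            ((1 : Matrix.unitaryGroup (Fin 0) ℂ) : Matrix (Fin 0) (Fin 0) ℂ) = 0 := by
          ext i j
          exact i.elim0
        rw [hz, StmtAux.matN, norm_zero]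
        exact hε
      · intro g hgF hg1
        exact absurd ⟨g, Finset.mem_erase.mpr ⟨hg1, hgF⟩⟩ hS
  · intro H
    classical
    have hB := StmtAux.boost H
    obtain ⟨efun, hesurj⟩ := exists_surjective_nat G
    have hstep : ∀ m : ℕ, ∃ (n : ℕ) (α : G → Matrix.unitaryGroup (Fin n) ℂ),
        (∀ g ∈ (Finset.range (m+1)).image efun, ∀ h ∈ (Finset.range (m+1)).image efun,
          matOpNorm ((α (g * h) : Matrix (Fin n) (Fin n) ℂ) -
            (α g : Matrix (Fin n) (Fin n) ℂ) * (α h : Matrix (Fin n) (Fin n) ℂ))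
            < 1/((m : ℝ)+1)) ∧
        (∀ g ∈ (Finset.range (m+1)).image efun, g ≠ 1 →
          matOpNorm ((α g : Matrix (Fin n) (Fin n) ℂ) - 1) > 1) := by
      intro m
      exact hB _ (1/((m : ℝ)+1)) (by positivity)
    choose d a hm1 hm2 using hstep
    refine ⟨d, a, ?_, ?_⟩
    · intro g h
      obtain ⟨i, hi⟩ := hesurj g
      obtain ⟨j, hj⟩ := hesurj h
      apply squeeze_zero' (g := fun m : ℕ => 1/((m : ℝ)+1))
      · exact Filter.Eventually.of_forall fun m => by
          rw [StmtAux.matN]; exact norm_nonneg _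
      · refine Filter.eventually_atTop.mpr ⟨max i j, fun m hm => ?_⟩
        have hgm : g ∈ (Finset.range (m+1)).image efun :=
          Finset.mem_image.mpr ⟨i, Finset.mem_range.mpr (by omega), hi⟩
        have hhm : h ∈ (Finset.range (m+1)).image efun :=
          Finset.mem_image.mpr ⟨j, Finset.mem_range.mpr (by omega), hj⟩
        exact (hm1 m g hgm h hhm).le
      · exact tendsto_one_div_add_atTop_nhds_zero_nat
    · intro g hg1 hcon
      obtain ⟨i, hi⟩ := hesurj g
      have h1 : ∀ᶠ m in atTop,
          matOpNorm ((a m g : Matrix (Fin (d m)) (Fin (d m)) ℂ) - 1) < 1 :=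
        hcon.eventually_lt_const one_pos
      have h2 : ∀ᶠ m in atTop,
          (1 : ℝ) < matOpNorm ((a m g : Matrix (Fin (d m)) (Fin (d m)) ℂ) - 1) := by
        refine Filter.eventually_atTop.mpr ⟨i, fun m hm => ?_⟩
        exact hm2 m g (Finset.mem_image.mpr ⟨i, Finset.mem_range.mpr (by omega), hi⟩) hg1
      obtain ⟨m, hma, hmb⟩ := (h1.and h2).exists
      linarith
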